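/- Label informativeness is small for near-independent edge distributions: let p be a symmetric probability distribution on Fin C × Fin C with marginal p̄ and H(p̄) > 0, and let ε ≥ 0 be such that |p k l − p̄ k · p̄ l| ≤ ε · p̄ k · p̄ l for all k, l. Then 0 ≤ LI(p) ≤ log(1 + ε)/H(p̄). (This is the deterministic core of the proposition that LI has asymptotic constant baseline 0 under the configuration model, where with high probability every p k l is within a factor 1 ± ε of p̄ k · p̄ l with ε = o(1).) -/

import Mathlib

open Finset

/-- **Deterministic core of the asymptotic constant baseline of LI.**
If every joint probability `p k l` is within a factor `1 ± ε` of the product of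
marginals, i.e. `|p k l − p̄ k·p̄ l| ≤ ε·p̄ k·p̄ l`, then
`0 ≤ LI(p) ≤ log(1 + ε)/H(p̄)`. -/
theorem label_informativeness_small_of_near_independent
    (C : ℕ) (p : Fin C → Fin C → ℝ)
    (hnonneg : ∀ k l, 0 ≤ p k l)
    (hsum : ∑ k, ∑ l, p k l = 1)
    (hsymm : ∀ k l, p k l = p l k)
    (hH : 0 < -∑ k, (∑ l, p k l) * Real.log (∑ l, p k l))
    (ε : ℝ) (hε : 0 ≤ ε)
    (hclose : ∀ k l, |p k l - (∑ l', p k l') * (∑ l', p l l')| ≤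
      ε * ((∑ l', p k l') * (∑ l', p l l'))) :
    let pbar : Fin C → ℝ := fun k => ∑ l, p k l
    let H : ℝ := -∑ k, pbar k * Real.log (pbar k)
    let LI : ℝ := (∑ k, ∑ l, p k l * Real.log (p k l / (pbar k * pbar l))) / H
    0 ≤ LI ∧ LI ≤ Real.log (1 + ε) / H := by
  intro pbar H LI
  have hpb : ∀ k, 0 ≤ pbar k := fun k =>
    Finset.sum_nonneg fun l _ => hnonneg k l
  have hpb_ge : ∀ k l, p k l ≤ pbar k := fun k l =>
    Finset.single_le_sum (fun i _ => hnonneg k i) (Finset.mem_univ l)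
  have hq : ∀ k l, p k l > 0 → 0 < pbar k * pbar l := by
    intro k l hp
    have h1 : 0 < pbar k := lt_of_lt_of_le hp (hpb_ge k l)
    have h2 : 0 < pbar l := lt_of_lt_of_le (by rw [← hsymm k l]; exact hp) (hpb_ge l k)
    exact mul_pos h1 h2
  have hsum1 : ∑ k, pbar k = 1 := hsum
  set N := ∑ k, ∑ l, p k l * Real.log (p k l / (pbar k * pbar l)) with hN
  -- lower bound: N ≥ 0
  have hNlow : 0 ≤ N := by
    have key : ∀ k l, p k l - pbar k * pbar l ≤
        p k l * Real.log (p k l / (pbar k * pbar l)) := by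
      intro k l
      rcases eq_or_lt_of_le (hnonneg k l) with h0 | hp
      · rw [← h0]; simp [mul_nonneg (hpb k) (hpb l)]
      · have hqpos := hq k l hp
        have hlog : Real.log ((pbar k * pbar l) / p k l) ≤
            (pbar k * pbar l) / p k l - 1 :=
          Real.log_le_sub_one_of_pos (div_pos hqpos hp)
        have heq : Real.log (p k l / (pbar k * pbar l)) =
            - Real.log ((pbar k * pbar l) / p k l) := by
          rw [← Real.log_inv]; congr 1
          field_simp
        rw [heq]
        have := mul_le_mul_of_nonneg_left hlog (le_of_lt hp)
        have hdiv : p k l * ((pbar k * pbar l) / p k l) = pbar k * pbar l := by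
          field_simp
        nlinarith
    have hsumge : ∑ k, ∑ l, (p k l - pbar k * pbar l) ≤ N := by
      apply Finset.sum_le_sum; intro k _
      exact Finset.sum_le_sum fun l _ => key k l
    have hzero : ∑ k, ∑ l, (p k l - pbar k * pbar l) = 0 := by
      have : ∑ k, ∑ l, (p k l - pbar k * pbar l)
          = (∑ k, ∑ l, p k l) - (∑ k, pbar k) * (∑ l, pbar l) := by
        rw [Finset.sum_mul_sum]
        rw [← Finset.sum_sub_distrib]
        congr 1; ext k
        rw [← Finset.sum_sub_distrib]
      rw [this]; norm_num [hsum, hsum1]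
    linarith
  -- upper bound: N ≤ log (1+ε)
  have hNup : N ≤ Real.log (1 + ε) := by
    have key : ∀ k l, p k l * Real.log (p k l / (pbar k * pbar l)) ≤
        p k l * Real.log (1 + ε) := by
      intro k l
      rcases eq_or_lt_of_le (hnonneg k l) with h0 | hp
      · rw [← h0]; simp
      · have hqpos := hq k l hp
        apply mul_le_mul_of_nonneg_left _ (le_of_lt hp)
        apply Real.log_le_log (div_pos hp hqpos)
        rw [div_le_iff₀ hqpos]
        have := hclose k l
        have habs : p k l - pbar k * pbar l ≤ ε * (pbar k * pbar l) :=
          le_trans (le_abs_self _) this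
        nlinarith
    calc N ≤ ∑ k, ∑ l, p k l * Real.log (1 + ε) := by
            apply Finset.sum_le_sum; intro k _
            exact Finset.sum_le_sum fun l _ => key k l
      _ = (∑ k, ∑ l, p k l) * Real.log (1 + ε) := by
            rw [Finset.sum_mul]; congr 1; ext k; rw [Finset.sum_mul]
      _ = Real.log (1 + ε) := by rw [hsum, one_mul]
  constructor
  · exact div_nonneg hNlow (le_of_lt hH)
  · have hHpos : 0 < H := hH
    exact (div_le_div_iff_of_pos_right hHpos).mpr hNup
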